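/- Let r ∈ ℂ with e^{2r} ≠ 1, R : ℂ → ℂ, and define c_0(x) = -e^{-r} - R(x), V_a(x) = c_0(x)/c_0(x+i), V_b(x) = c_0(x) - c_0(x-i). If moreover R satisfies the constraint μ(x)e^{-2irx}R(x) + R(x)/(e^r - e^{-r}) = 1 with μ i-periodic, then the function W(x,p) = e^{ixp}(1 - R(x)/(e^p - e^{-r})) satisfies W(x-i,p) + V_a(x)W(x+i,p) + (V_b(x) - e^p - e^{-p})W(x,p) = 0 for all p with e^p ≠ e^{-r}. -/

import Mathlib

open Complex

lemma key_alg (a b c t u q qi E : ℂ) (htu : t * u = 1) (hq : q * qi = 1)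
    (h1 : t ^ 2 * c - b = t * b * c) (h2 : t ^ 2 * b - a = t * a * b) :
    E * q * ((q - u) - a) * (-u - c) + E * qi * (-u - b) * ((q - u) - c)
      + E * (a - b - q - qi) * ((q - u) - b) * (-u - c) = 0 := by
  linear_combination (E * u^2 * (1 + t*b)) * h1 - (E * u^2 * (1 + t*c)) * h2
    + (E * (u^2 * (a - b) * (t*u + 1 + t*b + t*c)
        - ((a-b)*(u+b)*(u+c) + q*qi*(c-b)) * (1 + u*t))) * htu
    + (E * u^2 * t^2 * (c - b)) * hq

theorem N1_eigenfunction (r : ℂ) (hr : exp (2 * r) ≠ 1)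
    (μ R : ℂ → ℂ) (hper : ∀ x, μ (x + I) = μ x)
    (hcon : ∀ x, μ x * exp (-2 * I * r * x) * R x
      + R x / (exp r - exp (-r)) = 1)
    (c₀ Va Vb : ℂ → ℂ)
    (hc₀ : ∀ x, c₀ x = -exp (-r) - R x)
    (hc₀nz : ∀ x, c₀ x ≠ 0)
    (hVa : ∀ x, Va x = c₀ x / c₀ (x + I))
    (hVb : ∀ x, Vb x = c₀ x - c₀ (x - I))
    (W : ℂ → ℂ → ℂ)
    (hW : ∀ x p, W x p = exp (I * x * p) * (1 - R x / (exp p - exp (-r)))) :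
    ∀ x p, exp p ≠ exp (-r) →
      W (x - I) p + Va x * W (x + I) p + (Vb x - exp p - exp (-p)) * W x p = 0 := by
  have htu : exp r * exp (-r) = 1 := by rw [← exp_add]; simp
  have h2r : exp (2 * r) = exp r ^ 2 := by rw [sq, ← exp_add, two_mul]
  have hs : exp r - exp (-r) ≠ 0 := by
    intro h
    apply hr
    have he : exp r = exp (-r) := sub_eq_zero.mp h
    calc exp (2 * r) = exp r * exp r := by rw [two_mul, exp_add]
      _ = exp r * exp (-r) := by rw [← he]
      _ = 1 := htu
  have he2 : exp (2 * r) - 1 = exp r * (exp r - exp (-r)) := by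
    rw [two_mul, exp_add]; linear_combination htu
  have star : ∀ y, exp (2 * r) * R (y + I) - R y = exp r * R y * R (y + I) := by
    intro y
    have h1 := hcon y
    have h2 := hcon (y + I)
    rw [hper] at h2
    have hexp : exp (-2 * I * r * (y + I)) = exp (-2 * I * r * y) * exp (2 * r) := by
      rw [← exp_add]; congr 1; linear_combination (-2 * r) * Complex.I_mul_I
    rw [hexp] at h2
    set s := exp r - exp (-r) with hsdef
    set b := R y
    set c := R (y + I)
    have hv : s * s⁻¹ = 1 := mul_inv_cancel₀ hs
    have h3 : (s - b) * (exp (2 * r) * c) = (s - c) * b := by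
      linear_combination (-(exp (2 * r)) * c * s) * h1 + (b * s) * h2
        + (b * c * (exp (2 * r) - 1)) * hv
    have h4 : s * (exp (2 * r) * c - b) = s * (exp r * b * c) := by
      linear_combination h3 + b * c * he2
    exact mul_left_cancel₀ hs h4
  intro x p hp
  have hD : exp p - exp (-r) ≠ 0 := sub_ne_zero.mpr hp
  have hqqi : exp p * exp (-p) = 1 := by rw [← exp_add]; simp
  have h1 := star x
  have h2 := star (x - I)
  rw [sub_add_cancel] at h2
  rw [h2r] at h1 h2
  have hbc : -exp (-r) - R (x + I) ≠ 0 := by rw [← hc₀ (x + I)]; exact hc₀nz (x + I)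
  have hexp1 : exp (I * (x - I) * p) = exp (I * x * p) * exp p := by
    rw [← exp_add]; congr 1; linear_combination (-p) * Complex.I_mul_I
  have hexp2 : exp (I * (x + I) * p) = exp (I * x * p) * exp (-p) := by
    rw [← exp_add]; congr 1; linear_combination p * Complex.I_mul_I
  have key := key_alg (R (x - I)) (R x) (R (x + I)) (exp r) (exp (-r)) (exp p) (exp (-p))
    (exp (I * x * p)) htu hqqi h1 h2
  rw [hW, hW, hW, hVa, hVb, hc₀ x, hc₀ (x + I), hc₀ (x - I), hexp1, hexp2]
  field_simp
  linear_combination key
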